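/- For every event E, the intervals conv[Q̲(E), Q̄(E)] and [P̲(E), P̄(E)] overlap; equivalently, P̲(E) ≤ Q̄(E) and Q̲(E) ≤ P̄(E). -/
import Mathlib


open Filter Finset

/-- Capital process in the coin-tossing game with initial capital `a`. -/
def cap (a : ℝ) (p M x : ℕ → ℝ) : ℕ → ℝ
  | 0 => a
  | n + 1 => cap a p M x n + M n * (x n - p n)

/-- Forecaster's moves are probabilities in `[0,1]`. -/
def ValidP (p : ℕ → ℝ) : Prop := ∀ n, p n ∈ Set.Icc (0 : ℝ) 1

/-- Reality's moves are in `{0,1}`. -/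
def ValidX (x : ℕ → ℝ) : Prop := ∀ n, x n = 0 ∨ x n = 1

/-- A Skeptic strategy reads Forecaster's moves up to round `n` and Reality's
moves before round `n`. -/
def SAdapted (S : (ℕ → ℝ) → (ℕ → ℝ) → ℕ → ℝ) : Prop :=
  ∀ p p' x x' : ℕ → ℝ, ∀ n, (∀ k ≤ n, p k = p' k) → (∀ k < n, x k = x' k) →
    S p x n = S p' x' n

/-- A Reality strategy reads Forecaster's and Skeptic's moves up to round `n`. -/
def RAdapted (R : (ℕ → ℝ) → (ℕ → ℝ) → ℕ → ℝ) : Prop :=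
  ∀ p p' M M' : ℕ → ℝ, ∀ n, (∀ k ≤ n, p k = p' k) → (∀ k ≤ n, M k = M' k) →
    R p M n = R p' M' n

/-- Upper probability of an event `E` (a set of paths `(p, x)`). -/
noncomputable def UpperP (E : (ℕ → ℝ) → (ℕ → ℝ) → Prop) : ℝ :=
  sInf {a | ∃ S, SAdapted S ∧ ∀ p x, ValidP p → ValidX x →
    (∀ n, 0 ≤ cap a p (S p x) x n) ∧
    (E p x → ∀ ε : ℝ, 0 < ε → ∃ n, 1 - ε < cap a p (S p x) x n)}

/-- Lower probability. -/
noncomputable def LowerP (E : (ℕ → ℝ) → (ℕ → ℝ) → Prop) : ℝ :=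
  1 - UpperP (fun p x => ¬ E p x)

/-- The set of initial capitals `a` for which some Reality strategy guarantees
the event and keeps the capital at most 1, against every Forecaster and every
Skeptic keeping the capital nonnegative. -/
def QSet (E : (ℕ → ℝ) → (ℕ → ℝ) → Prop) : Set ℝ :=
  {a | ∃ R, RAdapted R ∧ ∀ p M : ℕ → ℝ, ValidP p →
    ValidX (R p M) ∧
    ((∀ n, 0 ≤ cap a p M (R p M) n) →
      (E p (R p M) ∧ ∀ n, cap a p M (R p M) n ≤ 1))}

noncomputable def UpperQ (E : (ℕ → ℝ) → (ℕ → ℝ) → Prop) : ℝ := sSup (QSet E)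

noncomputable def LowerQ (E : (ℕ → ℝ) → (ℕ → ℝ) → Prop) : ℝ :=
  1 - UpperQ (fun p x => ¬ E p x)

/- ### Auxiliary constructions -/

/-- Prefix approximations of Reality's adversarial move sequence. -/
noncomputable def pref (S : (ℕ → ℝ) → (ℕ → ℝ) → ℕ → ℝ) (p M : ℕ → ℝ) : ℕ → (ℕ → ℝ)
  | 0 => fun _ => 0
  | n + 1 => fun k =>
      if k < n then pref S p M n k
      else if k = n then (if 0 ≤ M n + S p (pref S p M n) n then 0 else 1)
      else 0

/-- Reality's adversarial strategy against Skeptic strategy `S` plus the live Skeptic `M`. -/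
noncomputable def RS (S : (ℕ → ℝ) → (ℕ → ℝ) → ℕ → ℝ) (p M : ℕ → ℝ) (n : ℕ) : ℝ :=
  if 0 ≤ M n + S p (pref S p M n) n then 0 else 1

lemma pref_eq (S : (ℕ → ℝ) → (ℕ → ℝ) → ℕ → ℝ) (p M : ℕ → ℝ) :
    ∀ n k, k < n → pref S p M n k = RS S p M k := by
  intro n
  induction n with
  | zero => intro k hk; omega
  | succ n ih =>
    intro k hk
    rcases lt_or_eq_of_le (Nat.lt_succ_iff.mp hk) with h | h
    · simp only [pref, if_pos h]
      exact ih k h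
    · subst h
      simp only [pref, lt_irrefl, if_neg (lt_irrefl _), if_pos rfl]
      rfl

lemma RS_valid (S : (ℕ → ℝ) → (ℕ → ℝ) → ℕ → ℝ) (p M : ℕ → ℝ) : ValidX (RS S p M) := by
  intro n
  unfold RS
  split <;> simp

lemma RS_spec (S : (ℕ → ℝ) → (ℕ → ℝ) → ℕ → ℝ) (hS : SAdapted S) (p M : ℕ → ℝ) (n : ℕ) :
    RS S p M n = if 0 ≤ M n + S p (RS S p M) n then 0 else 1 := by
  have h : S p (pref S p M n) n = S p (RS S p M) n :=
    hS p p _ _ n (fun k _ => rfl) (fun k hk => pref_eq S p M n k hk)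
  conv_lhs => rw [RS, h]

lemma pref_agree (S : (ℕ → ℝ) → (ℕ → ℝ) → ℕ → ℝ) (hS : SAdapted S)
    (p p' M M' : ℕ → ℝ) :
    ∀ n, (∀ k < n, p k = p' k) → (∀ k < n, M k = M' k) →
      pref S p M n = pref S p' M' n := by
  intro n
  induction n with
  | zero => intro _ _; rfl
  | succ n ih =>
    intro hp hM
    have hpn : ∀ k < n, p k = p' k := fun k hk => hp k (hk.trans (Nat.lt_succ_self n))
    have hMn : ∀ k < n, M k = M' k := fun k hk => hM k (hk.trans (Nat.lt_succ_self n))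
    have hpre : pref S p M n = pref S p' M' n := ih hpn hMn
    funext k
    simp only [pref]
    split
    · rw [hpre]
    · split
      · rw [hM n (Nat.lt_succ_self n), hpre,
          hS p p' (pref S p' M' n) (pref S p' M' n) n (fun k hk => hp k (Nat.lt_succ_of_le hk))
            (fun _ _ => rfl)]
      · rfl

lemma RS_adapted (S : (ℕ → ℝ) → (ℕ → ℝ) → ℕ → ℝ) (hS : SAdapted S) : RAdapted (RS S) := by
  intro p p' M M' n hp hM
  unfold RS
  rw [hM n le_rfl,
    pref_agree S hS p p' M M' n (fun k hk => hp k hk.le) (fun k hk => hM k hk.le),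
    hS p p' (pref S p' M' n) (pref S p' M' n) n hp (fun _ _ => rfl)]

/-- The combined capital never increases under Reality's adversarial play. -/
lemma key_bound (S : (ℕ → ℝ) → (ℕ → ℝ) → ℕ → ℝ) (hS : SAdapted S)
    (p M : ℕ → ℝ) (hp : ValidP p) (c a : ℝ) :
    ∀ n, cap c p M (RS S p M) n + cap a p (S p (RS S p M)) (RS S p M) n ≤ c + a := by
  intro n
  induction n with
  | zero => simp [cap]
  | succ n ih =>
    have hx := RS_spec S hS p M n
    have hp0 := (hp n).1
    have hp1 := (hp n).2
    simp only [cap]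
    have hterm : (M n + S p (RS S p M) n) * (RS S p M n - p n) ≤ 0 := by
      by_cases h : 0 ≤ M n + S p (RS S p M) n
      · rw [hx, if_pos h]
        nlinarith
      · rw [hx, if_neg h]
        push_neg at h
        nlinarith
    nlinarith

/-- Main lemma: a Skeptic strategy witnessing `a` for `F ⊇ ¬G` yields
`1 - a - δ ∈ QSet G`. -/
lemma main_mem (F G : (ℕ → ℝ) → (ℕ → ℝ) → Prop) (hFG : ∀ p x, ¬ G p x → F p x)
    (a δ : ℝ) (hδ : 0 < δ) (S : (ℕ → ℝ) → (ℕ → ℝ) → ℕ → ℝ) (hS : SAdapted S)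
    (hwin : ∀ p x, ValidP p → ValidX x →
      (∀ n, 0 ≤ cap a p (S p x) x n) ∧
      (F p x → ∀ ε : ℝ, 0 < ε → ∃ n, 1 - ε < cap a p (S p x) x n)) :
    (1 - a - δ) ∈ QSet G := by
  refine ⟨RS S, RS_adapted S hS, fun p M hp => ⟨RS_valid S p M, fun hM => ?_⟩⟩
  obtain ⟨hpos, hforce⟩ := hwin p (RS S p M) hp (RS_valid S p M)
  have hkey := key_bound S hS p M hp (1 - a - δ) a
  constructor
  · by_contra hG
    obtain ⟨n, hn⟩ := hforce (hFG p (RS S p M) hG) δ hδ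
    have h1 := hkey n
    have h2 := hM n
    linarith
  · intro n
    have h1 := hkey n
    have h2 := hpos n
    linarith

lemma cap_zeroM (a : ℝ) (p x : ℕ → ℝ) : ∀ n, cap a p (fun _ => 0) x n = a := by
  intro n
  induction n with
  | zero => rfl
  | succ n ih => simp [cap, ih]

/-- Every element of `QSet` is at most 1. -/
lemma qset_le_one (G : (ℕ → ℝ) → (ℕ → ℝ) → Prop) {a : ℝ} (ha : a ∈ QSet G) : a ≤ 1 := by
  obtain ⟨R, _, h⟩ := ha
  have hp : ValidP (fun _ => 0) := fun n => ⟨le_rfl, zero_le_one⟩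
  obtain ⟨_, himp⟩ := h (fun _ => 0) (fun _ => 0) hp
  by_contra h1
  push_neg at h1
  have hcap := cap_zeroM a (fun _ => 0) (R (fun _ => 0) (fun _ => 0))
  have := (himp (fun n => by rw [hcap n]; linarith)).2 0
  rw [hcap 0] at this
  linarith

lemma qset_bdd (G : (ℕ → ℝ) → (ℕ → ℝ) → Prop) : BddAbove (QSet G) :=
  ⟨1, fun _ ha => qset_le_one G ha⟩

/-- The set defining `UpperP F` contains 1. -/
lemma pset_one (F : (ℕ → ℝ) → (ℕ → ℝ) → Prop) :
    (1 : ℝ) ∈ {a | ∃ S, SAdapted S ∧ ∀ p x, ValidP p → ValidX x →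
      (∀ n, 0 ≤ cap a p (S p x) x n) ∧
      (F p x → ∀ ε : ℝ, 0 < ε → ∃ n, 1 - ε < cap a p (S p x) x n)} := by
  refine ⟨fun _ _ _ => 0, fun _ _ _ _ _ _ _ => rfl, fun p x _ _ => ?_⟩
  have hcap := cap_zeroM 1 p x
  exact ⟨fun n => by rw [hcap n]; norm_num,
    fun _ ε hε => ⟨0, by rw [hcap 0]; linarith⟩⟩

/-- Core inequality: `1 - UpperP F ≤ UpperQ G` when `¬G → F`. -/
lemma core (F G : (ℕ → ℝ) → (ℕ → ℝ) → Prop) (hFG : ∀ p x, ¬ G p x → F p x) :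
    1 - UpperP F ≤ UpperQ G := by
  have hmono : ∀ a ∈ {a | ∃ S, SAdapted S ∧ ∀ p x, ValidP p → ValidX x →
      (∀ n, 0 ≤ cap a p (S p x) x n) ∧
      (F p x → ∀ ε : ℝ, 0 < ε → ∃ n, 1 - ε < cap a p (S p x) x n)},
      1 - UpperQ G ≤ a := by
    intro a ⟨S, hS, hwin⟩
    have h : ∀ δ : ℝ, 0 < δ → 1 - a - δ ≤ UpperQ G := fun δ hδ =>
      le_csSup (qset_bdd G) (main_mem F G hFG a δ hδ S hS hwin)
    have : 1 - a ≤ UpperQ G := by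
      refine le_of_forall_pos_le_add (fun δ hδ => ?_)
      have := h δ hδ; linarith
    linarith
  have : 1 - UpperQ G ≤ UpperP F := le_csInf ⟨1, pset_one F⟩ hmono
  linarith

/-- For every event `E`, the intervals `conv[Q̲(E), Q̄(E)]` and
`[P̲(E), P̄(E)]` overlap: `P̲(E) ≤ Q̄(E)` and `Q̲(E) ≤ P̄(E)`. -/
theorem stmt_13 (E : (ℕ → ℝ) → (ℕ → ℝ) → Prop) :
    LowerP E ≤ UpperQ E ∧ LowerQ E ≤ UpperP E := by
  constructor
  · have := core (fun p x => ¬ E p x) E (fun _ _ h => h)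
    unfold LowerP
    linarith
  · have := core E (fun p x => ¬ E p x) (fun _ _ h => not_not.mp h)
    unfold LowerQ UpperQ at *
    linarith
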